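/- For all real x, y and λ > 0, the integral ∫_y^∞ φ(λ + (x−z)/(2λ)) e^{−z} z² dz equals (8λ⁵ − 8λ³x + 8λ³ + 2λx²) e^{−x} (1 − Φ(λ + (y−x)/(2λ))) + (−8λ⁴ + 4λ²x + 4λ²y) e^{−x} φ(λ + (y−x)/(2λ)). -/

import Mathlib

open Real MeasureTheory Filter Set
open Topology

/-- Standard normal density. -/
noncomputable def phi (t : ℝ) : ℝ := (Real.sqrt (2 * Real.pi))⁻¹ * Real.exp (-t ^ 2 / 2)

/-- Standard normal distribution function. -/
noncomputable def Phi (t : ℝ) : ℝ := ∫ s in Set.Iic t, phi s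

lemma phi_cont : Continuous phi := by
  unfold phi; fun_prop

lemma phi_nonneg (t : ℝ) : 0 ≤ phi t := by
  unfold phi; positivity

lemma phi_integrable : Integrable phi := by
  have h := (integrable_exp_neg_mul_sq (by norm_num : (0:ℝ) < 1/2)).const_mul
      (Real.sqrt (2 * Real.pi))⁻¹
  refine h.congr (Filter.Eventually.of_forall fun t => ?_)
  unfold phi; ring_nf

lemma phi_integral : ∫ t, phi t = 1 := by
  have h := integral_gaussian (1/2 : ℝ)
  have h2 : ∫ t : ℝ, phi t = (Real.sqrt (2 * Real.pi))⁻¹ * ∫ t : ℝ, Real.exp (-(1/2) * t ^ 2) := by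
    rw [← integral_const_mul]
    congr 1; funext t; unfold phi; ring_nf
  rw [h2]
  have : ∫ t : ℝ, Real.exp (-(1/2) * t ^ 2) = Real.sqrt (Real.pi / (1/2)) := by
    simpa using h
  rw [this]
  have hpi : (0:ℝ) < Real.pi := Real.pi_pos
  rw [show Real.pi / (1/2) = 2 * Real.pi by ring]
  rw [inv_mul_cancel₀ (by positivity)]

lemma hasDerivAt_phi (t : ℝ) : HasDerivAt phi (-t * phi t) t := by
  have h : HasDerivAt (fun s : ℝ => -s ^ 2 / 2) (-t) t := by
    have := ((hasDerivAt_pow 2 t).neg).div_const 2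
    simpa using this.congr_deriv (by ring)
  have := (h.exp).const_mul (Real.sqrt (2 * Real.pi))⁻¹
  unfold phi
  exact this.congr_deriv (by ring)

lemma hasDerivAt_Phi (t : ℝ) : HasDerivAt Phi (phi t) t := by
  have key : Phi = fun t => Phi 0 + ∫ u in (0:ℝ)..t, phi u := by
    funext t
    have := intervalIntegral.integral_Iic_sub_Iic (phi_integrable.integrableOn (s := Iic 0))
      (phi_integrable.integrableOn (s := Iic t))
    unfold Phi
    linarith [this]
  rw [key]
  simpa using
    (intervalIntegral.integral_hasDerivAt_right (phi_integrable.intervalIntegrable (a := 0) (b := t))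
      phi_cont.aestronglyMeasurable.stronglyMeasurableAtFilter phi_cont.continuousAt)

lemma Phi_tendsto : Tendsto Phi atTop (𝓝 1) := by
  have h := tendsto_setIntegral_of_monotone (f := phi) (μ := volume)
    (s := fun t : ℝ => Iic t) (fun t => measurableSet_Iic)
    (fun a b hab => Iic_subset_Iic.2 hab)
    (by rw [iUnion_Iic]; exact phi_integrable.integrableOn)
  have : (∫ x in ⋃ n : ℝ, Iic n, phi x) = 1 := by
    rw [iUnion_Iic, Measure.restrict_univ, phi_integral]
  rw [this] at h
  exact h

lemma phi_tendsto_zero : Tendsto phi atTop (𝓝 0) := by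
  have h1 : Tendsto (fun t : ℝ => -t ^ 2 / 2) atTop atBot := by
    apply tendsto_atBot_mono (fun t => by nlinarith [sq_nonneg t] : ∀ t : ℝ, -t^2/2 ≤ -t + 1)
    exact tendsto_atBot_add_const_right _ 1 (tendsto_neg_atTop_atBot.comp tendsto_id)
  have h2 := (Real.tendsto_exp_atBot.comp h1).const_mul (Real.sqrt (2 * Real.pi))⁻¹
  rw [mul_zero] at h2
  exact h2.congr fun t => rfl

lemma mul_phi_tendsto_zero : Tendsto (fun s => s * phi s) atTop (𝓝 0) := by
  have key : ∀ᶠ s : ℝ in atTop, s * phi s =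
      (Real.sqrt (2 * Real.pi))⁻¹ * ((s ^ 1 * Real.exp (-s)) * Real.exp (s - s ^ 2 / 2)) := by
    filter_upwards with s
    have h : Real.exp (-s) * Real.exp (s - s ^ 2 / 2) = Real.exp (-s ^ 2 / 2) := by
      rw [← Real.exp_add]; ring_nf
    unfold phi
    rw [pow_one, mul_assoc s, h]
    ring
  rw [tendsto_congr' key]
  have h1 : Tendsto (fun s : ℝ => s ^ 1 * Real.exp (-s)) atTop (𝓝 0) :=
    tendsto_pow_mul_exp_neg_atTop_nhds_zero 1
  have h2 : Tendsto (fun s : ℝ => Real.exp (s - s ^ 2 / 2)) atTop (𝓝 0) := by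
    apply Real.tendsto_exp_atBot.comp
    apply tendsto_atBot_mono (fun s => by nlinarith [sq_nonneg (s - 4)] : ∀ s : ℝ, s - s^2/2 ≤ -s + 8)
    exact tendsto_atBot_add_const_right _ 8 (tendsto_neg_atTop_atBot.comp tendsto_id)
  simpa using ((h1.mul h2).const_mul (Real.sqrt (2 * Real.pi))⁻¹)

theorem stmt2 (x y l : ℝ) (hl : 0 < l) :
    (∫ z in Set.Ioi y, phi (l + (x - z) / (2 * l)) * Real.exp (-z) * z ^ 2)
      = (8 * l ^ 5 - 8 * l ^ 3 * x + 8 * l ^ 3 + 2 * l * x ^ 2) * Real.exp (-x)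
          * (1 - Phi (l + (y - x) / (2 * l)))
        + (-8 * l ^ 4 + 4 * l ^ 2 * x + 4 * l ^ 2 * y) * Real.exp (-x)
          * phi (l + (y - x) / (2 * l)) := by
  have hl2 : (2 * l) ≠ 0 := by positivity
  set σ : ℝ → ℝ := fun z => l + (z - x) / (2 * l) with hσ
  set C1 : ℝ := 8 * l ^ 5 - 8 * l ^ 3 * x + 8 * l ^ 3 + 2 * l * x ^ 2 with hC1
  set G : ℝ → ℝ := fun z =>
    -(C1 * Real.exp (-x) * (1 - Phi (σ z)))
      - (-8 * l ^ 4 + 4 * l ^ 2 * x + 4 * l ^ 2 * z) * Real.exp (-x) * phi (σ z) with hG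
  have key : ∀ z : ℝ, phi (l + (x - z) / (2 * l)) * Real.exp (-z)
      = Real.exp (-x) * phi (σ z) := by
    intro z
    unfold phi
    rw [mul_assoc, ← Real.exp_add]
    rw [show Real.exp (-x) * ((Real.sqrt (2 * Real.pi))⁻¹ * Real.exp (-(σ z) ^ 2 / 2))
        = (Real.sqrt (2 * Real.pi))⁻¹ * Real.exp (-x + -(σ z) ^ 2 / 2) by
      rw [mul_left_comm, ← Real.exp_add]]
    congr 1
    simp only [hσ]
    field_simp
    ring
  have hσtop : Tendsto σ atTop atTop := by
    rw [hσ]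
    apply tendsto_atTop_add_const_left
    exact (tendsto_atTop_add_const_right _ (-x) tendsto_id).atTop_div_const (by positivity)
  have hderiv : ∀ z ∈ Ici y,
      HasDerivAt G (phi (l + (x - z) / (2 * l)) * Real.exp (-z) * z ^ 2) z := by
    intro z _
    have hσd : HasDerivAt σ (1 / (2 * l)) z := by
      rw [hσ]
      simpa using (((hasDerivAt_id z).sub_const x).div_const (2 * l)).const_add l
    have hPhi : HasDerivAt (fun z => Phi (σ z)) (phi (σ z) * (1 / (2 * l))) z :=
      (hasDerivAt_Phi (σ z)).comp z hσd
    have hphi : HasDerivAt (fun z => phi (σ z)) (-(σ z) * phi (σ z) * (1 / (2 * l))) z :=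
      (hasDerivAt_phi (σ z)).comp z hσd
    have hlin : HasDerivAt (fun z : ℝ => -8 * l ^ 4 + 4 * l ^ 2 * x + 4 * l ^ 2 * z)
        (4 * l ^ 2) z := by
      have h := ((hasDerivAt_id z).const_mul (4 * l ^ 2)).const_add
        (-8 * l ^ 4 + 4 * l ^ 2 * x)
      rw [mul_one] at h
      exact h
    have H := (((hPhi.const_sub 1).const_mul (C1 * Real.exp (-x))).neg).sub
      ((hlin.mul_const (Real.exp (-x))).mul hphi)
    rw [hG]
    refine H.congr_deriv ?_
    rw [show phi (l + (x - z) / (2 * l)) * Real.exp (-z) * z ^ 2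
        = Real.exp (-x) * phi (σ z) * z ^ 2 by rw [key z]]
    simp only [hσ, hC1]
    field_simp
    ring
  have hpos : ∀ z ∈ Ioi y, 0 ≤ phi (l + (x - z) / (2 * l)) * Real.exp (-z) * z ^ 2 := by
    intro z _
    have := phi_nonneg (l + (x - z) / (2 * l))
    positivity
  have htends : Tendsto G atTop (𝓝 0) := by
    have h1 : Tendsto (fun z => C1 * Real.exp (-x) * (1 - Phi (σ z))) atTop (𝓝 0) := by
      have := ((Phi_tendsto.comp hσtop).const_sub 1).const_mul (C1 * Real.exp (-x))
      simpa using this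
    have h2 : Tendsto (fun z =>
        (-8 * l ^ 4 + 4 * l ^ 2 * x + 4 * l ^ 2 * z) * Real.exp (-x) * phi (σ z))
        atTop (𝓝 0) := by
      have hH : Tendsto (fun s => ((8 * l ^ 2 * x - 16 * l ^ 4) + 8 * l ^ 3 * s) * phi s)
          atTop (𝓝 0) := by
        have := (phi_tendsto_zero.const_mul (8 * l ^ 2 * x - 16 * l ^ 4)).add
          (mul_phi_tendsto_zero.const_mul (8 * l ^ 3))
        simp only [mul_zero, add_zero] at this
        exact this.congr fun s => by ring
      have := (hH.comp hσtop).const_mul (Real.exp (-x))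
      rw [mul_zero] at this
      refine this.congr fun z => ?_
      simp only [Function.comp, hσ]
      field_simp
      ring
    rw [hG, show (0:ℝ) = -0 - 0 by norm_num]
    exact (h1.neg).sub h2
  have main := integral_Ioi_of_hasDerivAt_of_nonneg' hderiv hpos htends
  rw [main]
  simp only [hG, hσ, hC1]
  ring
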